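/- Let ℝ⁴₊ := {x ∈ ℝ⁴ : x₂² + x₃² + x₄² ≤ 2x₁x₂ and x₁ ≥ 0} and let A ∈ ℝ^{4×4} be the block-diagonal matrix with upper-left 2×2 block [[0,1],[0,0]] and lower-right 2×2 block [[0, 4π],[−π, 0]]. Identify the dual of ℝ⁴ with ℝ⁴ via the standard inner product; then the dual cone of ℝ⁴₊ is X₊' = {x ∈ ℝ⁴ : x₃² + x₄² ≤ x₁² + 2x₁x₂ and x₁ + x₂ ≥ 0}, and the dual semigroup (e^{tAᵀ})_{t≥0} is individually eventually nonnegative with respect to X₊': for each x ∈ X₊' there exists t₀ ≥ 0 such that e^{tAᵀ} x ∈ X₊' for all t ≥ t₀. -/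

import Mathlib

open scoped Matrix
open NormedSpace

section GeneralExp
variable {𝔸 : Type*} [NormedRing 𝔸] [NormedAlgebra ℝ 𝔸]

lemma exp_of_sq_eq_zero' (n : 𝔸) (h : n * n = 0) : exp n = 1 + n := by
  rw [exp_eq_tsum ℝ]
  have hz : ∀ k ∉ ({0, 1} : Finset ℕ), ((Nat.factorial k : ℝ))⁻¹ • n ^ k = 0 := by
    intro k hk
    simp only [Finset.mem_insert, Finset.mem_singleton] at hk
    push_neg at hk
    obtain ⟨m, rfl⟩ := Nat.exists_eq_add_of_le (show 2 ≤ k by omega)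
    rw [pow_add, pow_two, h, zero_mul, smul_zero]
  show (∑' (k : ℕ), ((Nat.factorial k : ℝ))⁻¹ • n ^ k) = 1 + n
  rw [(hasSum_sum_of_ne_finset_zero hz).tsum_eq]
  simp [Finset.sum_pair (by norm_num : (0:ℕ) ≠ 1)]

lemma exp_of_sq_eq_neg' (p b : 𝔸) (θ : ℝ) (hθ : θ ≠ 0) (hp : p * p = p)
    (hpb : p * b = b) (hb : b * b = -θ ^ 2 • p) :
    exp b = (1 - p) + Real.cos θ • p + (Real.sin θ / θ) • b := by
  rw [exp_eq_tsum ℝ]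
  refine HasSum.tsum_eq ?_
  have hpk : ∀ k : ℕ, p ^ (k + 1) = p := by
    intro k; induction k with
    | zero => simp
    | succ m ih => rw [pow_succ, ih, hp]
  have heven : ∀ k : ℕ, b ^ (2 * (k + 1)) = ((-1 : ℝ) ^ (k + 1) * θ ^ (2 * (k + 1))) • p := by
    intro k
    rw [pow_mul, pow_two, hb, smul_pow, hpk]
    congr 1
    rw [neg_pow, ← pow_mul]
  have hodd : ∀ k : ℕ, b ^ (2 * k + 1) = ((-1 : ℝ) ^ k * θ ^ (2 * k)) • b := by
    intro k
    rw [pow_succ, pow_mul, pow_two, hb, smul_pow]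
    rcases Nat.eq_zero_or_pos k with rfl | hk
    · simp
    · obtain ⟨m, rfl⟩ := Nat.exists_eq_add_of_lt hk
      rw [hpk, smul_mul_assoc, hpb]
      congr 1
      rw [neg_pow, ← pow_mul]
  refine HasSum.even_add_odd ?_ ?_
  · have hc : HasSum (fun k : ℕ => ((-1 : ℝ) ^ k * θ ^ (2 * k) / (Nat.factorial (2 * k) : ℝ)) • p)
        (Real.cos θ • p) := (Real.hasSum_cos θ).smul_const p
    have h0 : HasSum (fun k : ℕ => (if k = 0 then (1 - p) else 0)) (1 - p) :=
      hasSum_ite_eq 0 (1 - p)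
    have := h0.add hc
    convert this using 2 with k
    rcases Nat.eq_zero_or_pos k with rfl | hk
    · simp
    · obtain ⟨m, rfl⟩ := Nat.exists_eq_add_of_lt hk
      rw [heven]
      simp only [Nat.add_eq, if_neg (Nat.succ_ne_zero m), zero_add]
      rw [smul_smul]
      congr 1
      field_simp
  · have hs : HasSum
        (fun k : ℕ => ((-1 : ℝ) ^ k * θ ^ (2 * k + 1) / (Nat.factorial (2 * k + 1) : ℝ) / θ) • b)
        ((Real.sin θ / θ) • b) := ((Real.hasSum_sin θ).div_const θ).smul_const b
    convert hs using 2 with k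
    rw [hodd, smul_smul]
    congr 1
    rw [pow_succ]
    field_simp
end GeneralExp

/-- The linearly transformed ice cream cone in `ℝ⁴`. -/
def transformedIceCreamCone : Set (Fin 4 → ℝ) :=
  {x | (x 1) ^ 2 + (x 2) ^ 2 + (x 3) ^ 2 ≤ 2 * x 0 * x 1 ∧ 0 ≤ x 0}

/-- The block-diagonal matrix with blocks `[[0,1],[0,0]]` and `[[0,4π],[-π,0]]`. -/
noncomputable def exampleMatrixA : Matrix (Fin 4) (Fin 4) ℝ :=
  !![0, 1, 0, 0; 0, 0, 0, 0; 0, 0, 0, 4 * Real.pi; 0, 0, -Real.pi, 0]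

noncomputable def Nmat : Matrix (Fin 4) (Fin 4) ℝ := !![0,0,0,0; 1,0,0,0; 0,0,0,0; 0,0,0,0]
noncomputable def Bmat : Matrix (Fin 4) (Fin 4) ℝ :=
  !![0,0,0,0; 0,0,0,0; 0,0,0,-Real.pi; 0,0,4*Real.pi,0]
noncomputable def Pmat : Matrix (Fin 4) (Fin 4) ℝ := !![0,0,0,0; 0,0,0,0; 0,0,1,0; 0,0,0,1]

lemma mexp_sq_zero (n : Matrix (Fin 4) (Fin 4) ℝ) (h : n * n = 0) :
    NormedSpace.exp n = 1 + n := by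
  letI : SeminormedRing (Matrix (Fin 4) (Fin 4) ℝ) := Matrix.linftyOpSemiNormedRing
  letI : NormedRing (Matrix (Fin 4) (Fin 4) ℝ) := Matrix.linftyOpNormedRing
  letI : NormedAlgebra ℝ (Matrix (Fin 4) (Fin 4) ℝ) := Matrix.linftyOpNormedAlgebra
  exact exp_of_sq_eq_zero' n h

lemma mexp_rot (p b : Matrix (Fin 4) (Fin 4) ℝ) (θ : ℝ) (hθ : θ ≠ 0) (hp : p * p = p)
    (hpb : p * b = b) (hb : b * b = -θ ^ 2 • p) :
    NormedSpace.exp b = (1 - p) + Real.cos θ • p + (Real.sin θ / θ) • b := by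
  letI : SeminormedRing (Matrix (Fin 4) (Fin 4) ℝ) := Matrix.linftyOpSemiNormedRing
  letI : NormedRing (Matrix (Fin 4) (Fin 4) ℝ) := Matrix.linftyOpNormedRing
  letI : NormedAlgebra ℝ (Matrix (Fin 4) (Fin 4) ℝ) := Matrix.linftyOpNormedAlgebra
  exact exp_of_sq_eq_neg' p b θ hθ hp hpb hb

lemma hAT : exampleMatrixAᵀ = Nmat + Bmat := by
  ext i j
  fin_cases i <;> fin_cases j <;>
    simp [exampleMatrixA, Nmat, Bmat, Matrix.transpose_apply, Matrix.vecHead, Matrix.vecTail]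

lemma hNN : Nmat * Nmat = 0 := by
  ext i j
  fin_cases i <;> fin_cases j <;>
    simp [Nmat, Matrix.mul_apply, Fin.sum_univ_four, Matrix.vecHead, Matrix.vecTail]

lemma hNB : Nmat * Bmat = 0 := by
  ext i j
  fin_cases i <;> fin_cases j <;>
    simp [Nmat, Bmat, Matrix.mul_apply, Fin.sum_univ_four, Matrix.vecHead, Matrix.vecTail]

lemma hBN : Bmat * Nmat = 0 := by
  ext i j
  fin_cases i <;> fin_cases j <;>
    simp [Nmat, Bmat, Matrix.mul_apply, Fin.sum_univ_four, Matrix.vecHead, Matrix.vecTail]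

lemma hPP : Pmat * Pmat = Pmat := by
  ext i j
  fin_cases i <;> fin_cases j <;>
    simp [Pmat, Matrix.mul_apply, Fin.sum_univ_four, Matrix.vecHead, Matrix.vecTail]

lemma hPB : Pmat * Bmat = Bmat := by
  ext i j
  fin_cases i <;> fin_cases j <;>
    simp [Pmat, Bmat, Matrix.mul_apply, Fin.sum_univ_four, Matrix.vecHead, Matrix.vecTail]

lemma hBB : Bmat * Bmat = -(2*Real.pi)^2 • Pmat := by
  ext i j
  fin_cases i <;> fin_cases j <;>
    simp [Pmat, Bmat, Matrix.mul_apply, Fin.sum_univ_four, Matrix.vecHead, Matrix.vecTail] <;> ring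

lemma exp_formula (t : ℝ) : NormedSpace.exp (t • exampleMatrixAᵀ) =
    !![1,0,0,0; t,1,0,0;
       0,0, Real.cos (2*Real.pi*t), -(Real.sin (2*Real.pi*t))/2;
       0,0, 2*Real.sin (2*Real.pi*t), Real.cos (2*Real.pi*t)] := by
  rcases eq_or_ne t 0 with rfl | ht
  · rw [zero_smul, NormedSpace.exp_zero]
    ext i j
    fin_cases i <;> fin_cases j <;> simp [Matrix.one_apply, Matrix.vecHead, Matrix.vecTail]
  · have hθ : 2*Real.pi*t ≠ 0 := by
      have h1 := Real.pi_ne_zero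
      simp [ht, h1]
    have hcomm : (t • Nmat) * (t • Bmat) = (t • Bmat) * (t • Nmat) := by
      rw [Matrix.smul_mul, Matrix.mul_smul, hNB, Matrix.smul_mul, Matrix.mul_smul, hBN]
    rw [hAT, smul_add]
    rw [Matrix.exp_add_of_commute (t • Nmat) (t • Bmat) hcomm]
    rw [mexp_sq_zero (t • Nmat) (by
      rw [Matrix.smul_mul, Matrix.mul_smul, hNN]; simp)]
    rw [mexp_rot Pmat (t • Bmat) (2*Real.pi*t) hθ hPP
      (by rw [Matrix.mul_smul, hPB])
      (by rw [Matrix.smul_mul, Matrix.mul_smul, hBB, smul_smul, smul_smul]; congr 1; ring)]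
    ext i j
    fin_cases i <;> fin_cases j <;>
      simp [Nmat, Bmat, Pmat, Matrix.mul_apply, Fin.sum_univ_four, Matrix.one_apply,
        Matrix.vecHead, Matrix.vecTail] <;>
      field_simp <;> ring

lemma mulVec_formula (t : ℝ) (y : Fin 4 → ℝ) :
    (!![1,0,0,0; t,1,0,0;
       0,0, Real.cos (2*Real.pi*t), -(Real.sin (2*Real.pi*t))/2;
       0,0, 2*Real.sin (2*Real.pi*t), Real.cos (2*Real.pi*t)]) *ᵥ y
    = ![y 0, t * y 0 + y 1,
        Real.cos (2*Real.pi*t) * y 2 - Real.sin (2*Real.pi*t)/2 * y 3,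
        2*Real.sin (2*Real.pi*t) * y 2 + Real.cos (2*Real.pi*t) * y 3] := by
  funext i
  fin_cases i <;>
    simp [Matrix.mulVec, dotProduct, Fin.sum_univ_four, Matrix.vecHead,
      Matrix.vecTail] <;> ring

lemma lorentz_aux (A B a1 a2 a3 b1 b2 b3 : ℝ) (hA : 0 ≤ A) (hB : 0 ≤ B)
    (ha : a1 ^ 2 + a2 ^ 2 + a3 ^ 2 ≤ A ^ 2) (hb : b1 ^ 2 + b2 ^ 2 + b3 ^ 2 ≤ B ^ 2) :
    0 ≤ A * B + (a1 * b1 + a2 * b2 + a3 * b3) := by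
  have hcs : (a1 * b1 + a2 * b2 + a3 * b3) ^ 2
      ≤ (a1 ^ 2 + a2 ^ 2 + a3 ^ 2) * (b1 ^ 2 + b2 ^ 2 + b3 ^ 2) := by
    nlinarith [sq_nonneg (a1 * b2 - a2 * b1), sq_nonneg (a1 * b3 - a3 * b1),
      sq_nonneg (a2 * b3 - a3 * b2)]
  have h2 : (a1 * b1 + a2 * b2 + a3 * b3) ^ 2 ≤ (A * B) ^ 2 := by
    calc (a1 * b1 + a2 * b2 + a3 * b3) ^ 2
        ≤ (a1 ^ 2 + a2 ^ 2 + a3 ^ 2) * (b1 ^ 2 + b2 ^ 2 + b3 ^ 2) := hcs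
      _ ≤ A ^ 2 * B ^ 2 := mul_le_mul ha hb (by positivity) (by positivity)
      _ = (A * B) ^ 2 := by ring
  nlinarith [h2, mul_nonneg hA hB]

lemma dual_eq : {y : Fin 4 → ℝ | ∀ x ∈ transformedIceCreamCone, 0 ≤ y ⬝ᵥ x} =
    {x : Fin 4 → ℝ | (x 2) ^ 2 + (x 3) ^ 2 ≤ (x 0) ^ 2 + 2 * x 0 * x 1 ∧ 0 ≤ x 0 + x 1} := by
  ext y
  simp only [Set.mem_setOf_eq]
  constructor
  · intro h
    have h01 : 0 ≤ y 0 + y 1 := by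
      have := h ![1, 1, 0, 0] ⟨by show (1:ℝ) ^ 2 + (0:ℝ) ^ 2 + (0:ℝ) ^ 2 ≤ 2 * 1 * 1; norm_num, by norm_num⟩
      simpa [dotProduct, Fin.sum_univ_four] using this
    refine ⟨?_, h01⟩
    set w := Real.sqrt ((y 1) ^ 2 + (y 2) ^ 2 + (y 3) ^ 2) with hw
    have hw0 : 0 ≤ w := Real.sqrt_nonneg _
    have hw2 : w ^ 2 = (y 1) ^ 2 + (y 2) ^ 2 + (y 3) ^ 2 := Real.sq_sqrt (by positivity)
    have hx : ![w, w - y 1, -(y 2), -(y 3)] ∈ transformedIceCreamCone := by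
      refine ⟨?_, ?_⟩ <;>
        simp only [Set.mem_setOf_eq, Matrix.cons_val_zero, Matrix.cons_val_one,
          Matrix.head_cons, Matrix.cons_val_two, Matrix.cons_val_three, Matrix.tail_cons,
          Matrix.head_fin_const]
      · nlinarith [hw2]
      · exact hw0
    have hd := h _ hx
    simp only [dotProduct, Fin.sum_univ_four, Matrix.cons_val_zero, Matrix.cons_val_one,
      Matrix.head_cons, Matrix.cons_val_two, Matrix.cons_val_three, Matrix.tail_cons,
      Matrix.head_fin_const] at hd
    rcases eq_or_lt_of_le hw0 with h0 | h0
    · have := hw2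
      rw [← h0] at this
      nlinarith [sq_nonneg (y 1), sq_nonneg (y 2), sq_nonneg (y 3)]
    · have hle : w ≤ y 0 + y 1 := by nlinarith
      nlinarith
  · rintro ⟨h1, h2⟩ x ⟨hx1, hx0⟩
    simp only [dotProduct, Fin.sum_univ_four]
    have key := lorentz_aux (y 0 + y 1) (x 0) (y 1) (y 2) (y 3) (x 1 - x 0) (x 2) (x 3)
      h2 hx0 (by nlinarith) (by nlinarith)
    nlinarith [key]

/-- Identifying the dual of `ℝ⁴` with `ℝ⁴` via the standard inner product,
the dual cone of the transformed ice cream cone is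
`{x | x₃² + x₄² ≤ x₁² + 2 x₁ x₂ and x₁ + x₂ ≥ 0}`, and the dual semigroup `(e^{tAᵀ})_{t ≥ 0}`
is individually eventually nonnegative with respect to this dual cone. -/
theorem exampleDualSemigroup_individually_eventually_nonneg :
    ({y : Fin 4 → ℝ | ∀ x ∈ transformedIceCreamCone, 0 ≤ y ⬝ᵥ x} =
      {x : Fin 4 → ℝ | (x 2) ^ 2 + (x 3) ^ 2 ≤ (x 0) ^ 2 + 2 * x 0 * x 1 ∧ 0 ≤ x 0 + x 1}) ∧
    (∀ y ∈ {y' : Fin 4 → ℝ | ∀ x ∈ transformedIceCreamCone, 0 ≤ y' ⬝ᵥ x},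
      ∃ t₀ : ℝ, 0 ≤ t₀ ∧ ∀ t : ℝ, t₀ ≤ t →
        NormedSpace.exp (t • exampleMatrixAᵀ) *ᵥ y ∈
          {y' : Fin 4 → ℝ | ∀ x ∈ transformedIceCreamCone, 0 ≤ y' ⬝ᵥ x}) := by
  refine ⟨dual_eq, ?_⟩
  intro y hy
  rw [dual_eq] at hy
  obtain ⟨hq, hl⟩ := hy
  have hy0 : 0 ≤ y 0 := by nlinarith [sq_nonneg (y 2), sq_nonneg (y 3), sq_nonneg (y 0 + y 1)]
  rcases eq_or_lt_of_le hy0 with h0 | h0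
  · -- y 0 = 0
    have h2 : y 2 = 0 := by nlinarith [sq_nonneg (y 2), sq_nonneg (y 3)]
    have h3 : y 3 = 0 := by nlinarith [sq_nonneg (y 2), sq_nonneg (y 3)]
    refine ⟨0, le_refl 0, fun t ht => ?_⟩
    rw [dual_eq, exp_formula t, mulVec_formula]
    simp only [Set.mem_setOf_eq, Matrix.cons_val_zero, Matrix.cons_val_one, Matrix.head_cons,
      Matrix.cons_val_two, Matrix.cons_val_three, Matrix.tail_cons, Matrix.head_fin_const]
    have hy1 : 0 ≤ y 1 := by rw [← h0] at hl; simpa using hl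
    constructor
    · rw [h2, h3, ← h0]; norm_num
    · rw [← h0]; simp; nlinarith [hy1, mul_nonneg ht (le_refl (0:ℝ))]
  · -- 0 < y 0
    set S := (y 2) ^ 2 + (y 3) ^ 2 with hS
    refine ⟨|y 1| / y 0 + (10 * S + 2 * y 0 * |y 1|) / (2 * (y 0) ^ 2), by positivity,
      fun t ht => ?_⟩
    have hta : |y 1| ≤ t * y 0 := by
      have h1 : |y 1| / y 0 ≤ t :=
        le_trans (le_add_of_nonneg_right (by positivity)) ht
      calc |y 1| = (|y 1| / y 0) * y 0 := by field_simp
        _ ≤ t * y 0 := mul_le_mul_of_nonneg_right h1 hy0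
    have htb : 10 * S + 2 * y 0 * |y 1| ≤ 2 * (y 0) ^ 2 * t := by
      have h1 : (10 * S + 2 * y 0 * |y 1|) / (2 * (y 0) ^ 2) ≤ t :=
        le_trans (le_add_of_nonneg_left (by positivity)) ht
      calc 10 * S + 2 * y 0 * |y 1|
          = ((10 * S + 2 * y 0 * |y 1|) / (2 * (y 0) ^ 2)) * (2 * (y 0) ^ 2) := by field_simp
        _ ≤ t * (2 * (y 0) ^ 2) := mul_le_mul_of_nonneg_right h1 (by positivity)
        _ = 2 * (y 0) ^ 2 * t := by ring
    have ha1 : -|y 1| ≤ y 1 := neg_abs_le (y 1)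
    have ha2 : y 1 ≤ |y 1| := le_abs_self (y 1)
    rw [dual_eq, exp_formula t, mulVec_formula]
    simp only [Set.mem_setOf_eq, Matrix.cons_val_zero, Matrix.cons_val_one, Matrix.head_cons,
      Matrix.cons_val_two, Matrix.cons_val_three, Matrix.tail_cons, Matrix.head_fin_const]
    have hpy := Real.sin_sq_add_cos_sq (2 * Real.pi * t)
    have hs2 : Real.sin (2 * Real.pi * t) ^ 2 ≤ 1 := by
      nlinarith [sq_nonneg (Real.cos (2 * Real.pi * t))]
    have hc2 : Real.cos (2 * Real.pi * t) ^ 2 ≤ 1 := by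
      nlinarith [sq_nonneg (Real.sin (2 * Real.pi * t))]
    have hbound : (Real.cos (2 * Real.pi * t) * y 2 - Real.sin (2 * Real.pi * t) / 2 * y 3) ^ 2
        + (2 * Real.sin (2 * Real.pi * t) * y 2 + Real.cos (2 * Real.pi * t) * y 3) ^ 2
        ≤ 10 * S := by
      nlinarith [hpy, sq_nonneg (Real.sin (2 * Real.pi * t) * y 2 - Real.cos (2 * Real.pi * t) * y 3),
        mul_nonneg (sub_nonneg.2 hs2) (sq_nonneg (y 2)),
        mul_nonneg (sub_nonneg.2 hs2) (sq_nonneg (y 3)),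
        mul_nonneg (sub_nonneg.2 hc2) (sq_nonneg (y 2)),
        mul_nonneg (sub_nonneg.2 hc2) (sq_nonneg (y 3)),
        mul_nonneg (sq_nonneg (Real.sin (2 * Real.pi * t))) (sq_nonneg (y 2)),
        mul_nonneg (sq_nonneg (Real.sin (2 * Real.pi * t))) (sq_nonneg (y 3)),
        mul_nonneg (sq_nonneg (Real.cos (2 * Real.pi * t))) (sq_nonneg (y 2)),
        mul_nonneg (sq_nonneg (Real.cos (2 * Real.pi * t))) (sq_nonneg (y 3))]
    have hprod : 2 * y 0 * (-|y 1|) ≤ 2 * y 0 * y 1 :=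
      mul_le_mul_of_nonneg_left ha1 (by positivity)
    constructor
    · nlinarith [hbound, htb, hprod]
    · nlinarith [hta, ha1]
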